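/- Let N : ℝ → ℝ be differentiable, q : ℝ → ℝ differentiable with q'(s) = N(q(s)) for all s, and let (σ, ρ) be an extremal on an open interval I with N(q(σ(t))) ≠ 0 for all t ∈ I, whose first integrals at a base point t₀ ∈ I are C₀ = −N(q(σ(t₀)))(σ'(t₀)² + ρ'(t₀)²) and C₁ = −N(q(σ(t₀)))ρ'(t₀) with C₁ ≠ 0; set C₂ = C₀/C₁². If σ'(t₁) = 0 at some t₁ ∈ I (a turning point of the oscillating extremal), then C₂·N(q(σ(t₁))) = −1, i.e. N(q(σ(t₁))) = −1/C₂. (Turning points σ', σ'' of oscillating extremals of general type are determined by the equation N = −1/C₂.) -/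

import Mathlib

open Metric in
lemma const_of_hasDerivAt_zero' {F : ℝ → ℝ} {I : Set ℝ} (hIopen : IsOpen I)
    (hIconn : IsPreconnected I) (hF : ∀ t ∈ I, HasDerivAt F 0 t)
    {a b : ℝ} (ha : a ∈ I) (hb : b ∈ I) : F a = F b := by
  have hfd : ∀ t ∈ I, HasFDerivAt F (0 : ℝ →L[ℝ] ℝ) t := by
    intro t ht
    have h := (hF t ht).hasFDerivAt
    have : ContinuousLinearMap.toSpanSingleton ℝ (0 : ℝ) = 0 := by ext x; simp
    rwa [this] at h
  have hloc : ∀ x ∈ I, ∃ ε > 0, ball x ε ⊆ I ∧ ∀ y ∈ ball x ε, F y = F x := by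
    intro x hx
    obtain ⟨ε, hε, hball⟩ := Metric.isOpen_iff.1 hIopen x hx
    refine ⟨ε, hε, hball, fun y hy => ?_⟩
    refine (convex_ball x ε).is_const_of_fderivWithin_eq_zero
      (fun z hz => ((hfd z (hball hz)).differentiableAt).differentiableWithinAt)
      (fun z hz => ?_) hy (mem_ball_self hε)
    rw [fderivWithin_of_isOpen isOpen_ball hz, (hfd z (hball hz)).fderiv]
  set S := {t | t ∈ I ∧ F t = F a} with hS
  set T := {t | t ∈ I ∧ F t ≠ F a} with hT
  have hSopen : IsOpen S := by
    rw [isOpen_iff_mem_nhds]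
    rintro x ⟨hx, hfx⟩
    obtain ⟨ε, hε, hball, hconst⟩ := hloc x hx
    exact Filter.mem_of_superset (Metric.ball_mem_nhds x hε)
      (fun y hy => ⟨hball hy, (hconst y hy).trans hfx⟩)
  have hTopen : IsOpen T := by
    rw [isOpen_iff_mem_nhds]
    rintro x ⟨hx, hfx⟩
    have hc : ContinuousAt F x := (hfd x hx).differentiableAt.continuousAt
    have h1 : ∀ᶠ y in nhds x, F y ≠ F a := hc.eventually_ne hfx
    have h2 : ∀ᶠ y in nhds x, y ∈ I := hIopen.mem_nhds hx
    filter_upwards [h1, h2] with y hy1 hy2 using ⟨hy2, hy1⟩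
  by_contra hne
  have hsub : I ⊆ S ∪ T := fun t ht => by
    by_cases h : F t = F a
    · exact Or.inl ⟨ht, h⟩
    · exact Or.inr ⟨ht, h⟩
  obtain ⟨z, _, ⟨_, hz1⟩, ⟨_, hz2⟩⟩ :=
    hIconn S T hSopen hTopen hsub ⟨a, ha, ha, rfl⟩ ⟨b, hb, hb, fun h => hne h.symm⟩
  exact hz2 hz1

/-- Turning points of oscillating extremals of general type: along an extremal
with `N(q(σ)) ≠ 0` on `I` and first integrals `C₀`, `C₁ ≠ 0` (evaluated at a
base point `t₀ ∈ I`), if `σ'(t₁) = 0` at some `t₁ ∈ I`, then with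
`C₂ = C₀/C₁²` one has `C₂·N(q(σ(t₁))) = -1`, i.e. `N(q(σ(t₁))) = -1/C₂`. -/
theorem turning_points_of_oscillating_extremals
    (N q σ ρ : ℝ → ℝ) (I : Set ℝ) (hIopen : IsOpen I) (hIconn : IsPreconnected I)
    (hN : Differentiable ℝ N)
    (hq : Differentiable ℝ q) (hq' : ∀ s, deriv q s = N (q s))
    (hσ : ∀ t ∈ I, DifferentiableAt ℝ σ t)
    (hσ'' : ∀ t ∈ I, DifferentiableAt ℝ (deriv σ) t)
    (hρ : ∀ t ∈ I, DifferentiableAt ℝ ρ t)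
    (hρ'' : ∀ t ∈ I, DifferentiableAt ℝ (deriv ρ) t)
    (hext1 : ∀ t ∈ I, deriv (deriv σ) t
      = (1 / 2) * deriv N (q (σ t)) * ((deriv ρ t) ^ 2 - (deriv σ t) ^ 2))
    (hext2 : ∀ t ∈ I, deriv (deriv ρ) t
      = -(deriv N (q (σ t)) * deriv σ t * deriv ρ t))
    (hNne : ∀ t ∈ I, N (q (σ t)) ≠ 0)
    (t₀ : ℝ) (ht₀ : t₀ ∈ I) (C₀ C₁ : ℝ)
    (hC₀ : C₀ = -(N (q (σ t₀))) * ((deriv σ t₀) ^ 2 + (deriv ρ t₀) ^ 2))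
    (hC₁ : C₁ = -(N (q (σ t₀))) * deriv ρ t₀)
    (hC₁ne : C₁ ≠ 0)
    (t₁ : ℝ) (ht₁ : t₁ ∈ I) (hturn : deriv σ t₁ = 0) :
    (C₀ / C₁ ^ 2) * N (q (σ t₁)) = -1 ∧
    N (q (σ t₁)) = -1 / (C₀ / C₁ ^ 2) := by
  -- derivative of t ↦ N (q (σ t))
  have hNq : ∀ t ∈ I, HasDerivAt (fun t => N (q (σ t)))
      (deriv N (q (σ t)) * N (q (σ t)) * deriv σ t) t := by
    intro t ht
    have h1 : HasDerivAt q (N (q (σ t))) (σ t) := by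
      have := (hq (σ t)).hasDerivAt
      rwa [hq'] at this
    have h2 : HasDerivAt N (deriv N (q (σ t))) (q (σ t)) := (hN (q (σ t))).hasDerivAt
    have := (h2.comp (σ t) h1).comp t (hσ t ht).hasDerivAt
    exact this
  -- first integral F (= C₀ along the curve) is constant
  have hF0 : ∀ t ∈ I, HasDerivAt
      (fun t => -(N (q (σ t))) * ((deriv σ t) ^ 2 + (deriv ρ t) ^ 2)) 0 t := by
    intro t ht
    have hB : HasDerivAt (fun t => (deriv σ t) ^ 2 + (deriv ρ t) ^ 2)
        (2 * deriv σ t * deriv (deriv σ) t + 2 * deriv ρ t * deriv (deriv ρ) t) t := by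
      have h1 := ((hσ'' t ht).hasDerivAt).pow 2
      have h2 := ((hρ'' t ht).hasDerivAt).pow 2
      have := h1.add h2
      refine this.congr_deriv ?_
      push_cast
      ring
    have := ((hNq t ht).neg).mul hB
    refine this.congr_deriv ?_
    rw [hext1 t ht, hext2 t ht]
    simp only [Pi.neg_apply]
    ring
  have hG0 : ∀ t ∈ I, HasDerivAt (fun t => -(N (q (σ t))) * deriv ρ t) 0 t := by
    intro t ht
    have := ((hNq t ht).neg).mul (hρ'' t ht).hasDerivAt
    refine this.congr_deriv ?_
    rw [hext2 t ht]
    simp only [Pi.neg_apply]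
    ring
  have hC₀' : C₀ = -(N (q (σ t₁))) * ((deriv σ t₁) ^ 2 + (deriv ρ t₁) ^ 2) := by
    rw [hC₀]
    exact const_of_hasDerivAt_zero' hIopen hIconn hF0 ht₀ ht₁
  have hC₁' : C₁ = -(N (q (σ t₁))) * deriv ρ t₁ := by
    rw [hC₁]
    exact const_of_hasDerivAt_zero' hIopen hIconn hG0 ht₀ ht₁
  set n := N (q (σ t₁)) with hn
  have hnne : n ≠ 0 := hNne t₁ ht₁
  have hρne : deriv ρ t₁ ≠ 0 := by
    intro h
    apply hC₁ne
    rw [hC₁', h, mul_zero]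
  have key : (C₀ / C₁ ^ 2) * n = -1 := by
    rw [hC₀', hC₁', hturn]
    field_simp
    ring
  refine ⟨key, ?_⟩
  have hC₂ne : C₀ / C₁ ^ 2 ≠ 0 := by
    intro h
    rw [h, zero_mul] at key
    norm_num at key
  exact (eq_div_iff hC₂ne).mpr (by rw [mul_comm]; exact key)
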